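/- Let A be a commutative ring with finitely many minimal primes, and let U ⊆ Spec(A) be a dense open subset. Then U contains a dense open subset of the form D(g) for some g ∈ A. -/
import Mathlib

/-- Let `A` be a commutative ring with finitely many minimal primes and `U ⊆ Spec A`
a dense open subset. Then `U` contains a dense open of the form `D(g)`. -/
theorem stmt_2 {A : Type*} [CommRing A] (hfin : (minimalPrimes A).Finite)
    (U : Set (PrimeSpectrum A)) (hUopen : IsOpen U) (hUdense : Dense U) :
    ∃ g : A, (PrimeSpectrum.basicOpen g : Set (PrimeSpectrum A)) ⊆ U ∧
      Dense (PrimeSpectrum.basicOpen g : Set (PrimeSpectrum A)) := by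
  classical
  -- every minimal prime (as a point) lies in U
  have hmin : ∀ p ∈ minimalPrimes A, ∀ (hp : p.IsPrime),
      (⟨p, hp⟩ : PrimeSpectrum A) ∈ U := by
    intro p hpmin hp
    by_contra hpU
    -- the open set of points containing no other minimal prime
    set W : Set (PrimeSpectrum A) :=
      ⋂ q ∈ hfin.toFinset.erase p, (PrimeSpectrum.zeroLocus (q : Set A))ᶜ with hW
    have hWopen : IsOpen W := by
      apply isOpen_biInter_finset
      intro q _
      exact (PrimeSpectrum.isClosed_zeroLocus _).isOpen_compl
    have hpW : (⟨p, hp⟩ : PrimeSpectrum A) ∈ W := by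
      simp only [hW, Set.mem_iInter, Set.mem_compl_iff, PrimeSpectrum.mem_zeroLocus]
      intro q hq hqle
      rw [Finset.mem_erase, Set.Finite.mem_toFinset] at hq
      rw [minimalPrimes_eq_minimals] at hq hpmin
      have : q ≤ p := by
        intro x hx
        exact hqle hx
      exact hq.1 (le_antisymm (hpmin.2 hq.2.1 this) this).symm
    obtain ⟨x, hxW, hxU⟩ := hUdense.inter_open_nonempty W hWopen ⟨_, hpW⟩
    -- x contains some minimal prime, which must be p
    obtain ⟨q, hq, hqx⟩ := Ideal.exists_minimalPrimes_le (I := ⊥) (J := x.asIdeal) bot_le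
    have hq' : q ∈ minimalPrimes A := hq
    have hqp : q = p := by
      by_contra hne
      have : x ∈ (PrimeSpectrum.zeroLocus (q : Set A))ᶜ := by
        refine Set.mem_iInter₂.1 hxW q ?_
        rw [Finset.mem_erase, Set.Finite.mem_toFinset]
        exact ⟨hne, hq'⟩
      exact this ((PrimeSpectrum.mem_zeroLocus _ _).2 hqx)
    -- so x ∈ closure {p} ⊆ Uᶜ, contradicting x ∈ U
    have hx : x ∈ closure ({(⟨p, hp⟩ : PrimeSpectrum A)} : Set (PrimeSpectrum A)) := by
      rw [PrimeSpectrum.closure_singleton]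
      exact (PrimeSpectrum.mem_zeroLocus _ _).2 (hqp ▸ hqx)
    have : closure ({(⟨p, hp⟩ : PrimeSpectrum A)} : Set (PrimeSpectrum A)) ⊆ Uᶜ :=
      closure_minimal (Set.singleton_subset_iff.2 hpU) hUopen.isClosed_compl
    exact this hx hxU
  -- the vanishing ideal of Uᶜ
  set I : Ideal A := PrimeSpectrum.vanishingIdeal Uᶜ with hI
  have hZI : PrimeSpectrum.zeroLocus (I : Set A) = Uᶜ := by
    rw [hI, PrimeSpectrum.zeroLocus_vanishingIdeal_eq_closure,
      hUopen.isClosed_compl.closure_eq]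
  -- I is not contained in any minimal prime
  have hInot : ∀ p ∈ minimalPrimes A, ¬ I ≤ p := by
    intro p hp hle
    have hp' : p.IsPrime := hp.1.1
    have : (⟨p, hp'⟩ : PrimeSpectrum A) ∈ PrimeSpectrum.zeroLocus (I : Set A) :=
      (PrimeSpectrum.mem_zeroLocus _ _).2 hle
    rw [hZI] at this
    exact this (hmin p hp hp')
  -- prime avoidance
  have havoid : ¬ ((I : Set A) ⊆ ⋃ p ∈ (↑hfin.toFinset : Set (Ideal A)), (p : Set A)) := by
    rw [Ideal.subset_union_prime (⊥ : Ideal A) (⊥ : Ideal A)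
      (fun p hp _ _ => ((hfin.mem_toFinset.1 hp).1.1 : p.IsPrime))]
    rintro ⟨p, hp, hle⟩
    exact hInot p (hfin.mem_toFinset.1 hp) hle
  rw [Set.not_subset] at havoid
  obtain ⟨g, hgI, hg⟩ := havoid
  have hgmin : ∀ p ∈ minimalPrimes A, g ∉ p := by
    intro p hp hgp
    exact hg (Set.mem_biUnion (hfin.mem_toFinset.2 hp) hgp)
  refine ⟨g, ?_, ?_⟩
  · intro x hx
    by_contra hxU
    have : x ∈ PrimeSpectrum.zeroLocus (I : Set A) := hZI ▸ hxU
    exact (PrimeSpectrum.mem_basicOpen _ _).1 hx ((PrimeSpectrum.mem_zeroLocus _ _).1 this hgI)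
  · -- D(g) is dense since g avoids all minimal primes
    rw [dense_iff_inter_open]
    rintro V hVopen ⟨x, hxV⟩
    obtain ⟨q, hq, hqx⟩ := Ideal.exists_minimalPrimes_le (I := ⊥) (J := x.asIdeal) bot_le
    have hq' : q.IsPrime := hq.1.1
    refine ⟨⟨q, hq'⟩, ?_, (PrimeSpectrum.mem_basicOpen _ _).2 (hgmin q hq)⟩
    have hx : x ∈ closure ({(⟨q, hq'⟩ : PrimeSpectrum A)} : Set (PrimeSpectrum A)) := by
      rw [PrimeSpectrum.closure_singleton]
      exact (PrimeSpectrum.mem_zeroLocus _ _).2 hqx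
    by_contra hqV
    have : closure ({(⟨q, hq'⟩ : PrimeSpectrum A)} : Set (PrimeSpectrum A)) ⊆ Vᶜ :=
      closure_minimal (Set.singleton_subset_iff.2 hqV) hVopen.isClosed_compl
    exact this hx hxV
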